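/- Let φ : (0,1) → ℝ be a C¹ diffeomorphism onto ℝ whose derivative tends to +∞ as t tends to 0 and as t tends to 1. Then for every constant A > 1 there exists a C¹ diffeomorphism φ̃ : (0,1) → ℝ which coincides with φ on a neighborhood of 0 and on a neighborhood of 1, and whose derivative satisfies φ̃'(t) > A for every t ∈ (0,1). -/

import Mathlib

set_option maxHeartbeats 1000000


open Set Filter

/-- Any C¹ diffeomorphism from (0,1) onto ℝ whose derivative blows up at both ends
can be modified, keeping it unchanged near the ends, so that its derivative exceeds
any given constant A > 1. -/
theorem stmt_0 (φ φ' : ℝ → ℝ)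
    (hderiv : ∀ t ∈ Ioo (0:ℝ) 1, HasDerivAt φ (φ' t) t)
    (hderiv_cont : ContinuousOn φ' (Ioo (0:ℝ) 1))
    (hderiv_ne : ∀ t ∈ Ioo (0:ℝ) 1, φ' t ≠ 0)
    (hbij : BijOn φ (Ioo (0:ℝ) 1) univ)
    (hblow0 : Tendsto φ' (nhdsWithin 0 (Ioo (0:ℝ) 1)) atTop)
    (hblow1 : Tendsto φ' (nhdsWithin 1 (Ioo (0:ℝ) 1)) atTop)
    (A : ℝ) (hA : 1 < A) :
    ∃ ψ ψ' : ℝ → ℝ,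
      (∀ t ∈ Ioo (0:ℝ) 1, HasDerivAt ψ (ψ' t) t) ∧
      ContinuousOn ψ' (Ioo (0:ℝ) 1) ∧
      BijOn ψ (Ioo (0:ℝ) 1) univ ∧
      (∀ t ∈ Ioo (0:ℝ) 1, A < ψ' t) ∧
      (∃ ε > 0, (∀ t ∈ Ioo (0:ℝ) ε, ψ t = φ t) ∧ (∀ t ∈ Ioo (1 - ε) 1, ψ t = φ t)) := by
  set B : ℝ := A + 1 with hBdef
  have hB0 : (0:ℝ) < B := by simp only [hBdef]; linarith
  have hB2 : (2:ℝ) < B := by simp only [hBdef]; linarith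
  -- get a neighborhood of 0 where φ' > B
  have h0 : ∀ᶠ t in nhdsWithin 0 (Ioo (0:ℝ) 1), B < φ' t :=
    hblow0.eventually (eventually_gt_atTop B)
  rw [eventually_nhdsWithin_iff] at h0
  obtain ⟨d0, hd0, hd0'⟩ := Metric.eventually_nhds_iff.mp h0
  have h1 : ∀ᶠ t in nhdsWithin 1 (Ioo (0:ℝ) 1), B < φ' t :=
    hblow1.eventually (eventually_gt_atTop B)
  rw [eventually_nhdsWithin_iff] at h1
  obtain ⟨d1, hd1, hd1'⟩ := Metric.eventually_nhds_iff.mp h1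
  set ε : ℝ := min (min (d0/4) (d1/4)) (1/8) with hεdef
  have hε0 : 0 < ε := by
    apply lt_min (lt_min (by linarith) (by linarith)) (by norm_num)
  have hε8 : ε ≤ 1/8 := min_le_right _ _
  have hεd0 : ε ≤ d0/4 := (min_le_left _ _).trans (min_le_left _ _)
  have hεd1 : ε ≤ d1/4 := (min_le_left _ _).trans (min_le_right _ _)
  have hφ'0 : ∀ t ∈ Ioo (0:ℝ) 1, t ≤ 2*ε → B < φ' t := by
    intro t ht hle
    refine hd0' ?_ ht
    rw [Real.dist_eq, abs_of_pos (by linarith [ht.1])]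
    linarith
  have hφ'1 : ∀ t ∈ Ioo (0:ℝ) 1, 1 - 2*ε ≤ t → B < φ' t := by
    intro t ht hle
    refine hd1' ?_ ht
    rw [Real.dist_eq, abs_of_nonpos (by linarith [ht.2])]
    linarith
  have hεI : ε ∈ Ioo (0:ℝ) 1 := ⟨hε0, by linarith⟩
  have hφ'ε : B < φ' ε := hφ'0 ε hεI (by linarith)
  -- φ' is positive on (0,1)
  have hpos : ∀ t ∈ Ioo (0:ℝ) 1, 0 < φ' t := by
    intro t ht
    by_contra h
    push_neg at h
    have hlt : φ' t < 0 := h.lt_of_ne (hderiv_ne t ht)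
    have hsub : uIcc ε t ⊆ Ioo (0:ℝ) 1 := (ordConnected_Ioo).uIcc_subset hεI ht
    have hiv := intermediate_value_uIcc (hderiv_cont.mono hsub)
    have h0mem : (0:ℝ) ∈ uIcc (φ' ε) (φ' t) := by
      rw [Set.mem_uIcc]; right; constructor <;> linarith
    obtain ⟨u, hu, hu0⟩ := hiv h0mem
    exact hderiv_ne u (hsub hu) hu0
  -- φ is strictly monotone on (0,1)
  have hφcont : ContinuousOn φ (Ioo (0:ℝ) 1) :=
    fun t ht => (hderiv t ht).continuousAt.continuousWithinAt
  have hmono : StrictMonoOn φ (Ioo (0:ℝ) 1) := by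
    apply strictMonoOn_of_deriv_pos (convex_Ioo _ _) hφcont
    intro t ht
    rw [interior_Ioo] at ht
    rw [(hderiv t ht).deriv]
    exact hpos t ht
  -- choose δ
  have hε2I : ε/2 ∈ Ioo (0:ℝ) 1 := ⟨by positivity, by linarith⟩
  have hε8I : ε/8 ∈ Ioo (0:ℝ) 1 := ⟨by positivity, by linarith⟩
  obtain ⟨tstar, htstar, hφt⟩ := hbij.2.2 (mem_univ (min (φ (ε/2) - 2*B) (φ (ε/8)) - 1))
  have htlt : tstar < ε/8 := by
    by_contra hc
    push_neg at hc
    have := hmono.monotoneOn hε8I htstar hc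
    have h2 := min_le_right (φ (ε/2) - 2*B) (φ (ε/8))
    linarith [hφt ▸ this]
  set δ : ℝ := tstar/2 with hδdef
  have hδ0 : 0 < δ := by simp only [hδdef]; linarith [htstar.1]
  have hδε : 16*δ < ε := by simp only [hδdef]; linarith
  have h2δφ : φ (2*δ) ≤ φ (ε/2) - 2*B := by
    have h2d : 2*δ = tstar := by simp only [hδdef]; ring
    rw [h2d, hφt]
    have := min_le_left (φ (ε/2) - 2*B) (φ (ε/8))
    linarith
  -- the bump functions
  set Λ : ℝ → ℝ := fun u => max 0 (min 1 (min ((u - ε)/ε) ((1 - ε - u)/ε))) with hΛdef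
  set θ : ℝ → ℝ := fun u => max 0 (min 1 (min ((u - δ)/δ) ((ε - u)/(ε/2)))) with hθdef
  set Θ : ℝ → ℝ := fun u => θ u * (φ' u - B) with hΘdef
  have hΛnn : ∀ u, 0 ≤ Λ u := fun u => le_max_left 0 _
  have hΛle : ∀ u, Λ u ≤ 1 := fun u => max_le zero_le_one (min_le_left _ _)
  have hΛ0a : ∀ u : ℝ, u ≤ ε → Λ u = 0 := by
    intro u h
    apply max_eq_left
    refine (min_le_right _ _).trans ((min_le_left _ _).trans ?_)
    apply div_nonpos_of_nonpos_of_nonneg <;> linarith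
  have hΛ0b : ∀ u : ℝ, 1 - ε ≤ u → Λ u = 0 := by
    intro u h
    apply max_eq_left
    refine (min_le_right _ _).trans ((min_le_right _ _).trans ?_)
    apply div_nonpos_of_nonpos_of_nonneg <;> linarith
  have hΛ1 : ∀ u : ℝ, 2*ε ≤ u → u ≤ 1 - 2*ε → Λ u = 1 := by
    intro u h h'
    have e1 : (1:ℝ) ≤ (u - ε)/ε := (one_le_div hε0).mpr (by linarith)
    have e2 : (1:ℝ) ≤ (1 - ε - u)/ε := (one_le_div hε0).mpr (by linarith)
    simp only [hΛdef]
    rw [min_eq_left (le_min e1 e2), max_eq_right zero_le_one]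
  have hθnn : ∀ u, 0 ≤ θ u := fun u => le_max_left 0 _
  have hθle : ∀ u, θ u ≤ 1 := fun u => max_le zero_le_one (min_le_left _ _)
  have hθ0a : ∀ u : ℝ, u ≤ δ → θ u = 0 := by
    intro u h
    apply max_eq_left
    refine (min_le_right _ _).trans ((min_le_left _ _).trans ?_)
    apply div_nonpos_of_nonpos_of_nonneg <;> linarith
  have hθ0b : ∀ u : ℝ, ε ≤ u → θ u = 0 := by
    intro u h
    apply max_eq_left
    refine (min_le_right _ _).trans ((min_le_right _ _).trans ?_)
    apply div_nonpos_of_nonpos_of_nonneg <;> linarith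
  have hθ1 : ∀ u : ℝ, 2*δ ≤ u → u ≤ ε/2 → θ u = 1 := by
    intro u h h'
    have e1 : (1:ℝ) ≤ (u - δ)/δ := (one_le_div hδ0).mpr (by linarith)
    have e2 : (1:ℝ) ≤ (ε - u)/(ε/2) := (one_le_div (by linarith)).mpr (by linarith)
    simp only [hθdef]
    rw [min_eq_left (le_min e1 e2), max_eq_right zero_le_one]
  have contΛ : Continuous Λ := by
    apply continuous_const.max
    apply continuous_const.min
    exact ((continuous_id.sub continuous_const).div_const _).min
      ((continuous_const.sub continuous_id).div_const _)
  have contθ : Continuous θ := by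
    apply continuous_const.max
    apply continuous_const.min
    exact ((continuous_id.sub continuous_const).div_const _).min
      ((continuous_const.sub continuous_id).div_const _)
  have contΘ : Continuous Θ := by
    rw [continuous_iff_continuousAt]
    intro x
    by_cases hx : x ∈ Ioo (0:ℝ) 1
    · exact (contθ.continuousAt).mul
        ((hderiv_cont.continuousAt (Ioo_mem_nhds hx.1 hx.2)).sub continuousAt_const)
    · simp only [mem_Ioo, not_and_or, not_lt] at hx
      have hev : Θ =ᶠ[nhds x] fun _ => 0 := by
        rcases hx with hx | hx
        · filter_upwards [Iio_mem_nhds (show x < δ by linarith)] with u hu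
          simp only [hΘdef, hθ0a u (le_of_lt hu), zero_mul]
        · filter_upwards [Ioi_mem_nhds (show ε < x by linarith)] with u hu
          simp only [hΘdef, hθ0b u (le_of_lt hu), zero_mul]
      exact hev.continuousAt
  -- the integral quantities
  set M : ℝ := ∫ u in δ..(1-ε), B * Λ u with hMdef
  set I : ℝ := ∫ u in δ..(1-ε), Θ u with hIdef
  have hδ1ε : δ ≤ 1 - ε := by linarith
  have hΘnn : ∀ u, 0 ≤ Θ u := by
    intro u
    rcases le_or_gt u δ with h | h
    · simp [hΘdef, hθ0a u h]
    rcases le_or_gt ε u with h' | h'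
    · simp [hΘdef, hθ0b u h']
    have huI : u ∈ Ioo (0:ℝ) 1 := ⟨by linarith, by linarith⟩
    have := hφ'0 u huI (by linarith)
    exact mul_nonneg (hθnn u) (by linarith)
  have hMnn : 0 ≤ M :=
    intervalIntegral.integral_nonneg hδ1ε (fun u _ => mul_nonneg hB0.le (hΛnn u))
  have intΛ : ∀ a b : ℝ, IntervalIntegrable (fun u => B * Λ u) MeasureTheory.volume a b :=
    fun a b => (continuous_const.mul contΛ).intervalIntegrable a b
  have intΘ : ∀ a b : ℝ, IntervalIntegrable Θ MeasureTheory.volume a b :=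
    fun a b => contΘ.intervalIntegrable a b
  have hMle : M ≤ B := by
    have h1 : M ≤ ∫ _u in δ..(1-ε), B := by
      apply intervalIntegral.integral_mono_on hδ1ε (intΛ _ _) intervalIntegrable_const
      intro u _
      nlinarith [hΛle u, hΛnn u]
    rw [intervalIntegral.integral_const, smul_eq_mul] at h1
    nlinarith
  have hIlb : 3*B/2 ≤ I := by
    have hsub2 : uIcc (2*δ) (ε/2) ⊆ Ioo (0:ℝ) 1 := by
      rw [uIcc_of_le (by linarith)]
      exact fun u hu => ⟨by linarith [hu.1], by linarith [hu.2]⟩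
    have hφint : IntervalIntegrable φ' MeasureTheory.volume (2*δ) (ε/2) :=
      (hderiv_cont.mono hsub2).intervalIntegrable
    have hftc : ∫ u in (2*δ)..(ε/2), φ' u = φ (ε/2) - φ (2*δ) :=
      intervalIntegral.integral_eq_sub_of_hasDerivAt
        (fun u hu => hderiv u (hsub2 hu)) hφint
    have hmid : ∫ u in (2*δ)..(ε/2), Θ u = ∫ u in (2*δ)..(ε/2), (φ' u - B) := by
      apply intervalIntegral.integral_congr
      intro u hu
      rw [uIcc_of_le (by linarith)] at hu
      simp only [hΘdef, hθ1 u hu.1 hu.2, one_mul]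
    have hmidval : ∫ u in (2*δ)..(ε/2), Θ u = (φ (ε/2) - φ (2*δ)) - (ε/2 - 2*δ) * B := by
      rw [hmid, intervalIntegral.integral_sub hφint intervalIntegrable_const, hftc,
        intervalIntegral.integral_const, smul_eq_mul]
    have hsplit2 : (∫ u in (2*δ)..(ε/2), Θ u) + ∫ u in (ε/2)..(1-ε), Θ u
        = ∫ u in (2*δ)..(1-ε), Θ u :=
      intervalIntegral.integral_add_adjacent_intervals (intΘ _ _) (intΘ _ _)
    have hsplit1 : (∫ u in δ..(2*δ), Θ u) + ∫ u in (2*δ)..(1-ε), Θ u = I :=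
      intervalIntegral.integral_add_adjacent_intervals (intΘ _ _) (intΘ _ _)
    have hnn1 : 0 ≤ ∫ u in δ..(2*δ), Θ u :=
      intervalIntegral.integral_nonneg (by linarith) (fun u _ => hΘnn u)
    have hnn2 : 0 ≤ ∫ u in (ε/2)..(1-ε), Θ u :=
      intervalIntegral.integral_nonneg (by linarith) (fun u _ => hΘnn u)
    nlinarith [hmidval, hsplit2, hsplit1]
  have hI0 : 0 < I := by linarith
  set s : ℝ := M / I with hsdef
  have hs0 : 0 ≤ s := div_nonneg hMnn hI0.le
  have hs1 : s ≤ 1 := (div_le_one hI0).mpr (by linarith)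
  -- the modified derivative increment
  set fh : ℝ → ℝ := fun u => B * Λ u - s * Θ u with hfhdef
  have contfh : Continuous fh := (continuous_const.mul contΛ).sub (continuous_const.mul contΘ)
  have intfh : ∀ a b : ℝ, IntervalIntegrable fh MeasureTheory.volume a b :=
    fun a b => contfh.intervalIntegrable a b
  have hfh0a : ∀ u : ℝ, u ≤ δ → fh u = 0 := by
    intro u h
    simp [hfhdef, hΘdef, hΛ0a u (by linarith), hθ0a u h]
  have hfh0b : ∀ u : ℝ, 1 - ε ≤ u → fh u = 0 := by
    intro u h
    simp [hfhdef, hΘdef, hΛ0b u h, hθ0b u (by linarith)]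
  set F : ℝ → ℝ := fun t => ∫ u in δ..t, fh u with hFdef
  set ψ : ℝ → ℝ := fun t => φ t + F t with hψdef
  set ψd : ℝ → ℝ := fun t => φ' t + fh t with hψddef
  have hFd : ∀ t : ℝ, HasDerivAt F (fh t) t :=
    fun t => (contfh.integral_hasStrictDerivAt δ t).hasDerivAt
  have hψd : ∀ t ∈ Ioo (0:ℝ) 1, HasDerivAt ψ (ψd t) t :=
    fun t ht => (hderiv t ht).add (hFd t)
  have hψdcont : ContinuousOn ψd (Ioo (0:ℝ) 1) :=
    fun t ht => ((hderiv_cont t ht).add (contfh.continuousAt.continuousWithinAt))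
  -- derivative bound
  have hψdgt : ∀ t ∈ Ioo (0:ℝ) 1, A < ψd t := by
    intro t ht
    simp only [hψddef, hfhdef, hΘdef]
    by_cases h1 : t < 2*ε
    · have hφB : B < φ' t := hφ'0 t ht (le_of_lt h1)
      have hsθ : s * θ t ≤ 1 := mul_le_one₀ hs1 (hθnn t) (hθle t)
      have : s * (θ t * (φ' t - B)) ≤ φ' t - B := by nlinarith [mul_nonneg hs0 (hθnn t)]
      have hΛt := hΛnn t
      simp only [hBdef] at hφB this ⊢
      nlinarith
    by_cases h2 : 1 - 2*ε < t
    · have hφB : B < φ' t := hφ'1 t ht (le_of_lt h2)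
      have hθt : θ t = 0 := hθ0b t (by linarith)
      rw [hθt]
      have hΛt := hΛnn t
      simp only [hBdef] at hφB ⊢
      nlinarith
    · push_neg at h1 h2
      have hθt : θ t = 0 := hθ0b t (by linarith)
      have hΛt : Λ t = 1 := hΛ1 t h1 h2
      rw [hθt, hΛt]
      have := hpos t ht
      simp only [hBdef]
      linarith
  -- ψ equals φ near the ends
  have hψeq0 : ∀ t ∈ Ioo (0:ℝ) δ, ψ t = φ t := by
    intro t ht
    have hF0 : F t = 0 := by
      simp only [hFdef]
      rw [intervalIntegral.integral_congr (g := fun _ => (0:ℝ))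
        (fun u hu => by
          rw [uIcc_of_ge (le_of_lt ht.2)] at hu
          exact hfh0a u hu.2)]
      simp
    simp only [hψdef, hF0, add_zero]
  have hψeq1 : ∀ t ∈ Ioo (1-ε) 1, ψ t = φ t := by
    intro t ht
    have hF0 : F t = 0 := by
      have hsplit : (∫ u in δ..(1-ε), fh u) + ∫ u in (1-ε)..t, fh u = F t :=
        intervalIntegral.integral_add_adjacent_intervals (intfh _ _) (intfh _ _)
      have hz : ∫ u in (1-ε)..t, fh u = 0 := by
        rw [intervalIntegral.integral_congr (g := fun _ => (0:ℝ))
          (fun u hu => by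
            rw [uIcc_of_le (le_of_lt ht.1)] at hu
            exact hfh0b u hu.1)]
        simp
      have hmain : ∫ u in δ..(1-ε), fh u = M - s * I := by
        simp only [hfhdef]
        rw [intervalIntegral.integral_sub (intΛ _ _)
          (show IntervalIntegrable (fun u => s * Θ u) MeasureTheory.volume δ (1-ε) from
            (continuous_const.mul contΘ).intervalIntegrable _ _)]
        simp only [intervalIntegral.integral_const_mul, hMdef, hIdef]
      have : M - s * I = 0 := by
        simp only [hsdef]
        field_simp
        ring
      rw [← hsplit, hz, hmain, this, add_zero]
    simp only [hψdef, hF0, add_zero]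
  -- bijectivity
  have hψmono : StrictMonoOn ψ (Ioo (0:ℝ) 1) := by
    apply strictMonoOn_of_deriv_pos (convex_Ioo _ _)
      (fun t ht => (hψd t ht).continuousAt.continuousWithinAt)
    intro t ht
    rw [interior_Ioo] at ht
    rw [(hψd t ht).deriv]
    linarith [hψdgt t ht]
  have hψbij : BijOn ψ (Ioo (0:ℝ) 1) univ := by
    refine ⟨fun _ _ => mem_univ _, hψmono.injOn, ?_⟩
    intro y _
    have hδ2I : δ/2 ∈ Ioo (0:ℝ) 1 := ⟨by linarith, by linarith⟩
    have hrI : 1 - ε/2 ∈ Ioo (0:ℝ) 1 := ⟨by linarith, by linarith⟩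
    obtain ⟨t₁, ht₁, hφ1⟩ := hbij.2.2 (mem_univ (min y (φ (δ/2)) - 1))
    obtain ⟨t₂, ht₂, hφ2⟩ := hbij.2.2 (mem_univ (max y (φ (1 - ε/2)) + 1))
    have ht₁lt : t₁ < δ/2 := by
      by_contra hc
      push_neg at hc
      have := hmono.monotoneOn hδ2I ht₁ hc
      have h2 := min_le_right y (φ (δ/2))
      linarith [hφ1 ▸ this]
    have ht₂gt : 1 - ε/2 < t₂ := by
      by_contra hc
      push_neg at hc
      have := hmono.monotoneOn ht₂ hrI hc
      have h2 := le_max_right y (φ (1 - ε/2))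
      linarith [hφ2 ▸ this]
    have hψt₁ : ψ t₁ = φ t₁ := hψeq0 t₁ ⟨ht₁.1, by linarith⟩
    have hψt₂ : ψ t₂ = φ t₂ := hψeq1 t₂ ⟨by linarith, ht₂.2⟩
    have ht₁₂ : t₁ ≤ t₂ := by linarith
    have hIccsub : Icc t₁ t₂ ⊆ Ioo (0:ℝ) 1 :=
      fun u hu => ⟨lt_of_lt_of_le ht₁.1 hu.1, lt_of_le_of_lt hu.2 ht₂.2⟩
    have hcont : ContinuousOn ψ (Icc t₁ t₂) :=
      fun u hu => (hψd u (hIccsub hu)).continuousAt.continuousWithinAt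
    have hy : y ∈ Icc (ψ t₁) (ψ t₂) := by
      rw [hψt₁, hψt₂, hφ1, hφ2]
      constructor
      · linarith [min_le_left y (φ (δ/2))]
      · linarith [le_max_left y (φ (1 - ε/2))]
    obtain ⟨u, hu, hupsy⟩ := intermediate_value_Icc ht₁₂ hcont hy
    exact ⟨u, hIccsub hu, hupsy⟩
  refine ⟨ψ, ψd, hψd, hψdcont, hψbij, hψdgt, δ, hδ0, ?_, ?_⟩
  · exact hψeq0
  · intro t ht
    exact hψeq1 t ⟨by linarith [ht.1], ht.2⟩
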